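/- Trivial su(3)-centralizer in g₂: with the basis P₀,…,P₆,Q₀,…,Q₆ of g₂ ⊆ so(7) as above, let su(3) ⊆ g₂ be the span of {P₀, Q₀, Q₁, Q₂, Q₃, Q₄, Q₅, Q₆}, and let x = P₀ + P₁. Then the only element y of this su(3) with [y,x] = 0 is y = 0. -/

import Mathlib

/-- `e7 i j = E_{ij} - E_{ji}` as a real 7×7 matrix (0-based indices; the paper's
`e_{kl}` is `e7 (k-1) (l-1)`). -/
def e7 (i j : Fin 7) : Matrix (Fin 7) (Fin 7) ℝ :=
  Matrix.single i j 1 - Matrix.single j i 1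

/-- `P₀ = e₃₂ + e₆₇`. -/
def P0g2 : Matrix (Fin 7) (Fin 7) ℝ := e7 2 1 + e7 5 6

/-- `P₁ = e₁₃ + e₅₇`. -/
def P1g2 : Matrix (Fin 7) (Fin 7) ℝ := e7 0 2 + e7 4 6

/-- `Q₀=e₄₅+e₆₇, Q₁=e₄₆+e₅₇, Q₂=e₅₆+e₇₄, Q₃=e₃₆+e₇₂, Q₄=e₂₆+e₃₇, Q₅=e₂₄+e₃₅, Q₆=e₂₅+e₄₃`. -/
def Qg2 : Fin 7 → Matrix (Fin 7) (Fin 7) ℝ :=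
  ![e7 3 4 + e7 5 6, e7 3 5 + e7 4 6, e7 4 5 + e7 6 3, e7 2 5 + e7 6 1,
    e7 1 5 + e7 2 6, e7 1 3 + e7 2 4, e7 1 4 + e7 3 2]

lemma Qg2_0 : Qg2 0 = e7 3 4 + e7 5 6 := rfl
lemma Qg2_1 : Qg2 1 = e7 3 5 + e7 4 6 := rfl
lemma Qg2_2 : Qg2 2 = e7 4 5 + e7 6 3 := rfl
lemma Qg2_3 : Qg2 3 = e7 2 5 + e7 6 1 := rfl
lemma Qg2_4 : Qg2 4 = e7 1 5 + e7 2 6 := rfl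
lemma Qg2_5 : Qg2 5 = e7 1 3 + e7 2 4 := rfl
lemma Qg2_6 : Qg2 6 = e7 1 4 + e7 3 2 := rfl

set_option maxHeartbeats 2000000
/-- the centralizer of `x = P₀ + P₁` in the copy of `su(3)` spanned by
`{P₀, Q₀, Q₁, Q₂, Q₃, Q₄, Q₅, Q₆}` inside `g₂ ⊆ so(7)` is trivial: if
`c₀ P₀ + Σ dⱼ Qⱼ` commutes with `x` then all coefficients vanish. -/
theorem su3_centralizer_in_g2_trivial
    (c : ℝ) (d : Fin 7 → ℝ)
    (h : ⁅c • P0g2 + ∑ j, d j • Qg2 j, P0g2 + P1g2⁆ = 0) :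
    c = 0 ∧ d = 0 := by
  rw [Ring.lie_def] at h
  have E : ∀ i j : Fin 7, (∑ k, ((c • P0g2 + ∑ j, d j • Qg2 j) i k * (P0g2 + P1g2) k j
        - (P0g2 + P1g2) i k * (c • P0g2 + ∑ j, d j • Qg2 j) k j)) = 0 := by
    intro i j
    have h' : ((c • P0g2 + ∑ j, d j • Qg2 j) * (P0g2 + P1g2)
        - (P0g2 + P1g2) * (c • P0g2 + ∑ j, d j • Qg2 j)) i j = 0 := by rw [h]; rfl
    rw [Matrix.sub_apply, Matrix.mul_apply, Matrix.mul_apply,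
      ← Finset.sum_sub_distrib] at h'
    exact h'
  have h01 := E 0 1
  have h03 := E 0 3
  have h04 := E 0 4
  have h05 := E 0 5
  have h06 := E 0 6
  have h34 := E 3 4
  have h36 := E 3 6
  have h45 := E 4 5
  simp only [Fin.sum_univ_seven, Qg2_0, Qg2_1, Qg2_2, Qg2_3, Qg2_4, Qg2_5, Qg2_6,
    P0g2, P1g2, e7, Matrix.add_apply, Matrix.sub_apply, Matrix.smul_apply,
    Matrix.single, Matrix.of_apply,
    Fin.ext_iff, show ((0:Fin 7):ℕ)=0 from rfl, show ((1:Fin 7):ℕ)=1 from rfl,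
    show ((2:Fin 7):ℕ)=2 from rfl, show ((3:Fin 7):ℕ)=3 from rfl,
    show ((4:Fin 7):ℕ)=4 from rfl, show ((5:Fin 7):ℕ)=5 from rfl,
    show ((6:Fin 7):ℕ)=6 from rfl] at h01 h03 h04 h05 h06 h34 h36 h45
  simp (config := { decide := true }) at h01 h03 h04 h05 h06 h34 h36 h45
  refine ⟨by linarith, funext fun j => ?_⟩
  fin_cases j <;> simp <;> linarith
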